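/- Every simplicial complex K is d(K)-collapsible, where d(K) = max over faces σ of K of |M(σ)|, and M(σ) is the set of vertices appearing in the minimal exclusion sequence of σ. -/
import Mathlib
set_option linter.unusedSectionVars false
set_option linter.unusedVariables false


variable {V : Type*} [Fintype V] [LinearOrder V]

open Finset


/-- `W` dominates the set `A` in `G`: every vertex of `A` is in `W` or adjacent to a vertex of `W`. -/
def Dominates (G : SimpleGraph V) (W A : Finset V) : Prop :=
  ∀ a ∈ A, a ∈ W ∨ ∃ w ∈ W, G.Adj w a

/-- `I` is an independent set of `G`. -/
def IndepSet (G : SimpleGraph V) (I : Finset V) : Prop :=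
  ∀ u ∈ I, ∀ v ∈ I, ¬ G.Adj u v

instance (G : SimpleGraph V) [DecidableRel G.Adj] (I : Finset V) :
    Decidable (IndepSet G I) := by unfold IndepSet; infer_instance

/-- The domination number of `G`. -/
noncomputable def gamma (G : SimpleGraph V) : ℕ :=
  sInf {k | ∃ W : Finset V, W.card = k ∧ Dominates G W Finset.univ}

/-- The independence domination number of `G`. -/
noncomputable def igamma (G : SimpleGraph V) : ℕ :=
  sInf {k | ∀ I : Finset V, IndepSet G I → ∃ W : Finset V, W.card ≤ k ∧ Dominates G W I}

/-- The noncover complex of `G`: faces are the vertex sets whose complement is not independent. -/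
def NC (G : SimpleGraph V) [DecidableRel G.Adj] : Finset (Finset V) :=
  Finset.univ.filter fun W => ¬ IndepSet G Wᶜ

/-- The independence complex of `G`. -/
def IndComplex (G : SimpleGraph V) [DecidableRel G.Adj] : Finset (Finset V) :=
  Finset.univ.filter fun I => IndepSet G I

/-- The combinatorial Alexander dual of a complex on the full vertex set `V`. -/
def AlexDual (K : Finset (Finset V)) : Finset (Finset V) :=
  Finset.univ.filter fun s => sᶜ ∉ K

/-- `K` is a simplicial complex (downward closed family of finite sets). -/
def IsComplex (K : Finset (Finset V)) : Prop :=
  ∀ σ ∈ K, ∀ τ ⊆ σ, τ ∈ K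

/-- `s` is a maximal face (facet) of `K`. -/
def IsMaxFace (K : Finset (Finset V)) (s : Finset V) : Prop :=
  s ∈ K ∧ ∀ t ∈ K, s ⊆ t → t = s

/-- `σ` is a free face of `K`: a face contained in a unique maximal face. -/
def IsFreeFace (K : Finset (Finset V)) (σ : Finset V) : Prop :=
  σ ∈ K ∧ ∃ τ ∈ K, σ ⊆ τ ∧ ∀ ρ ∈ K, σ ⊆ ρ → ρ ⊆ τ

/-- `K'` is obtained from `K` by an elementary `d`-collapse. -/
def ElemCollapse (d : ℕ) (K K' : Finset (Finset V)) : Prop :=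
  ∃ σ : Finset V, IsFreeFace K σ ∧ σ.card ≤ d ∧ K' = K.filter fun ρ => ¬ σ ⊆ ρ

/-- `K` is `d`-collapsible. -/
def Collapsible (d : ℕ) (K : Finset (Finset V)) : Prop :=
  Relation.ReflTransGen (ElemCollapse d) K ∅

/-- chordality -/
def IsChordal (G : SimpleGraph V) : Prop :=
  ∀ (u : V) (c : G.Walk u u), c.IsCycle → 4 ≤ c.length →
    ∃ x ∈ c.support, ∃ y ∈ c.support, G.Adj x y ∧ s(x, y) ∉ c.edges

/-- simplicial vertex -/
def IsSimplicialVtx (G : SimpleGraph V) (v : V) : Prop :=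
  ∀ x y : V, G.Adj v x → G.Adj v y → x ≠ y → G.Adj x y


/-- Auxiliary recursion computing the first `j` entries of the minimal exclusion sequence of
the face `σ` with respect to the ordered list `facets 0, facets 1, …` of maximal faces. -/
def mesAux (σ : Finset V) (facets : ℕ → Finset V) : ℕ → List V
  | 0 => []
  | j + 1 =>
    let prev := mesAux σ facets j
    let A := σ \ facets j
    let B := A.filter fun v => v ∈ prev
    prev ++
      (if hB : B.Nonempty then [B.min' hB]
       else if hA : A.Nonempty then [A.min' hA] else [])

open Classical in
/-- `i(σ)` (in 0-based indexing): the least `j` such that `σ ⊆ facets j`. -/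
noncomputable def mesIdx (facets : ℕ → Finset V) (σ : Finset V) : ℕ :=
  if h : ∃ j, σ ⊆ facets j then Nat.find h else 0

/-- The minimal exclusion sequence `mes(σ)` of a face `σ`. -/
noncomputable def mes (facets : ℕ → Finset V) (σ : Finset V) : List V :=
  mesAux σ facets (mesIdx facets σ)

/-- `M(σ)`: the set of vertices appearing in `mes(σ)`. -/
noncomputable def mesSet (facets : ℕ → Finset V) (σ : Finset V) : Finset V :=
  (mes facets σ).toFinset

/-- The ordered facets `σ₁, σ₂, …` of the noncover complex `NC G`: complements of the edges of
`G`, where the edges are listed in decreasing lexicographic order (induced by the vertex order). -/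
noncomputable def ncFacets (G : SimpleGraph V) [DecidableRel G.Adj] : ℕ → Finset V :=
  fun j =>
    let L : List (Lex (V × V)) :=
      ((Finset.univ.filter fun p : Lex (V × V) =>
        G.Adj (ofLex p).1 (ofLex p).2 ∧ (ofLex p).1 < (ofLex p).2).sort (· ≤ ·)).reverse
    match L[j]? with
    | some p => ({(ofLex p).1, (ofLex p).2} : Finset V)ᶜ
    | none => ∅



section AuxMES

/-! ### Auxiliary lemmas for the minimal exclusion sequence -/

variable (f : ℕ → Finset V)

lemma mesAux_succ' (σ : Finset V) (j : ℕ) :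
    mesAux σ f (j+1) = mesAux σ f j ++
      (if hB : ((σ \ f j).filter fun v => v ∈ mesAux σ f j).Nonempty
        then [((σ \ f j).filter fun v => v ∈ mesAux σ f j).min' hB]
        else if hA : (σ \ f j).Nonempty then [(σ \ f j).min' hA] else []) := rfl

lemma step_shape (σ : Finset V) (j : ℕ) :
    mesAux σ f (j+1) = mesAux σ f j ∨
      ∃ a, mesAux σ f (j+1) = mesAux σ f j ++ [a] ∧ a ∈ σ ∧ a ∉ f j := by
  rw [mesAux_succ']
  by_cases hB : ((σ \ f j).filter fun v => v ∈ mesAux σ f j).Nonempty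
  · rw [dif_pos hB]
    refine Or.inr ⟨_, rfl, ?_, ?_⟩ <;>
    · have := Finset.min'_mem _ hB
      simp only [Finset.mem_filter, Finset.mem_sdiff] at this
      tauto
  · rw [dif_neg hB]
    by_cases hA : (σ \ f j).Nonempty
    · rw [dif_pos hA]
      refine Or.inr ⟨_, rfl, ?_, ?_⟩ <;>
      · have := Finset.min'_mem _ hA
        rw [Finset.mem_sdiff] at this
        tauto
    · rw [dif_neg hA]; exact Or.inl (List.append_nil _)

lemma step_append (σ : Finset V) (j : ℕ) :
    ∃ X, mesAux σ f (j+1) = mesAux σ f j ++ X := ⟨_, mesAux_succ' f σ j⟩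

lemma step_spec {σ : Finset V} {j : ℕ} (hj : ¬ σ ⊆ f j) :
    ∃ a, mesAux σ f (j+1) = mesAux σ f j ++ [a] ∧ a ∈ σ ∧ a ∉ f j := by
  rcases step_shape f σ j with h | h
  · exfalso
    have hA : (σ \ f j).Nonempty := by rwa [Finset.sdiff_nonempty]
    rw [mesAux_succ'] at h
    by_cases hB : ((σ \ f j).filter fun v => v ∈ mesAux σ f j).Nonempty
    · rw [dif_pos hB] at h; simpa using congrArg List.length h
    · rw [dif_neg hB, dif_pos hA] at h; simpa using congrArg List.length h
  · exact h

lemma mem_mesAux {σ : Finset V} {j : ℕ} {v : V} (hv : v ∈ mesAux σ f j) : v ∈ σ := by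
  induction j with
  | zero => simp [mesAux] at hv
  | succ j ih =>
    rcases step_shape f σ j with h | ⟨a, h, ha, _⟩ <;> rw [h] at hv
    · exact ih hv
    · rcases List.mem_append.1 hv with h' | h'
      · exact ih h'
      · rwa [List.mem_singleton.1 h']

lemma mesAux_prefix (σ : Finset V) {j k : ℕ} (hjk : j ≤ k) :
    mesAux σ f j <+: mesAux σ f k := by
  induction k with
  | zero => simp_all
  | succ k ih =>
    rcases Nat.lt_or_ge j (k+1) with h | h
    · have := ih (Nat.lt_succ_iff.1 h)
      rcases step_shape f σ k with h' | ⟨a, h', _⟩ <;> rw [h']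
      · exact this
      · exact this.trans (List.prefix_append _ _)
    · have : j = k + 1 := le_antisymm hjk h
      subst this; exact List.prefix_refl _

lemma mesIdx_spec_and {σ : Finset V} (h : ∃ j, σ ⊆ f j) :
    σ ⊆ f (mesIdx f σ) ∧ ∀ k < mesIdx f σ, ¬ σ ⊆ f k := by
  classical
  unfold mesIdx
  rw [dif_pos h]
  exact ⟨Nat.find_spec h, fun k hk => Nat.find_min h hk⟩

lemma mesIdx_le {σ : Finset V} {j : ℕ} (hj : σ ⊆ f j) : mesIdx f σ ≤ j := by
  classical
  unfold mesIdx
  rw [dif_pos ⟨j, hj⟩]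
  exact Nat.find_le hj

lemma mesIdx_ge {σ : Finset V} {t : ℕ} (h : ∃ j, σ ⊆ f j)
    (H : ∀ k < t, ¬ σ ⊆ f k) : t ≤ mesIdx f σ := by
  by_contra hc
  push_neg at hc
  exact H _ hc (mesIdx_spec_and f h).1

lemma mesAux_length {σ : Finset V} (h : ∃ j, σ ⊆ f j) :
    ∀ {j : ℕ}, j ≤ mesIdx f σ → (mesAux σ f j).length = j := by
  intro j
  induction j with
  | zero => intro _; rfl
  | succ j ih =>
    intro hj
    have hj' : j < mesIdx f σ := hj
    obtain ⟨a, ha, _, _⟩ := step_spec f ((mesIdx_spec_and f h).2 j hj')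
    rw [ha, List.length_append, ih (le_of_lt hj'), List.length_singleton]

lemma mes_length {σ : Finset V} (h : ∃ j, σ ⊆ f j) :
    (mes f σ).length = mesIdx f σ := mesAux_length f h le_rfl

lemma mesAux_eq_take {σ : Finset V} (h : ∃ j, σ ⊆ f j) {j : ℕ} (hj : j ≤ mesIdx f σ) :
    mesAux σ f j = (mes f σ).take j := by
  have hp : mesAux σ f j <+: mes f σ := mesAux_prefix f σ hj
  rw [List.prefix_iff_eq_take.1 hp, mesAux_length f h hj]

lemma mem_mesSet_of_mem_mesAux {σ : Finset V} (h : ∃ j, σ ⊆ f j) {j : ℕ}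
    (hj : j ≤ mesIdx f σ) {v : V} (hv : v ∈ mesAux σ f j) : v ∈ mesSet f σ :=
  List.mem_toFinset.2 ((mesAux_prefix f σ hj).subset hv)

lemma mes_entry {σ : Finset V} (h : ∃ j, σ ⊆ f j) {j : ℕ} (hj : j < mesIdx f σ) :
    ∃ a, mesAux σ f (j+1) = mesAux σ f j ++ [a] ∧ a ∈ σ ∧ a ∉ f j ∧ a ∈ mesSet f σ := by
  obtain ⟨a, ha, h1, h2⟩ := step_spec f ((mesIdx_spec_and f h).2 j hj)
  refine ⟨a, ha, h1, h2, mem_mesSet_of_mem_mesAux f h hj (by rw [ha]; simp)⟩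

lemma mesSet_subset {σ : Finset V} : mesSet f σ ⊆ σ := by
  intro v hv
  exact mem_mesAux f (List.mem_toFinset.1 hv)

lemma mesIdx_le_of_mesSet_subset {σ ρ : Finset V} (hσ : ∃ j, σ ⊆ f j)
    (hρ : ∃ j, ρ ⊆ f j) (hM : mesSet f σ ⊆ ρ) : mesIdx f σ ≤ mesIdx f ρ := by
  refine mesIdx_ge f hρ (fun k hk hsub => ?_)
  obtain ⟨a, _, _, haf, haM⟩ := mes_entry f hσ hk
  exact haf (hsub (hM haM))

-- === KEY2 ===
lemma mes_eq_of_between {σ ρ : Finset V} (hσ : ∃ j, σ ⊆ f j)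
    (hM : mesSet f σ ⊆ ρ) (hρσ : ρ ⊆ σ) : mes f ρ = mes f σ := by
  set t := mesIdx f σ with ht
  have hρex : ∃ j, ρ ⊆ f j := ⟨t, hρσ.trans (mesIdx_spec_and f hσ).1⟩
  have main : ∀ j, j ≤ t → mesAux ρ f j = mesAux σ f j := by
    intro j
    induction j with
    | zero => intro _; rfl
    | succ j ih =>
      intro hj
      have hj' : j < t := hj
      have hprev := ih (le_of_lt hj')
      have hσj : ¬ σ ⊆ f j := (mesIdx_spec_and f hσ).2 j hj'
      have hBeq : ((ρ \ f j).filter fun v => v ∈ mesAux σ f j)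
          = ((σ \ f j).filter fun v => v ∈ mesAux σ f j) := by
        ext v
        simp only [Finset.mem_filter, Finset.mem_sdiff]
        constructor
        · rintro ⟨⟨hvρ, hvf⟩, hvp⟩
          exact ⟨⟨mem_mesAux f hvp, hvf⟩, hvp⟩
        · rintro ⟨⟨hvσ, hvf⟩, hvp⟩
          exact ⟨⟨hM (mem_mesSet_of_mem_mesAux f hσ (le_of_lt hj') hvp), hvf⟩, hvp⟩
      by_cases hB : ((σ \ f j).filter fun v => v ∈ mesAux σ f j).Nonempty
      · have e1 : mesAux ρ f (j+1)
            = mesAux σ f j ++ [((σ \ f j).filter fun v => v ∈ mesAux σ f j).min' hB] := by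
          rw [mesAux_succ', hprev, hBeq, dif_pos hB]
        have e2 : mesAux σ f (j+1)
            = mesAux σ f j ++ [((σ \ f j).filter fun v => v ∈ mesAux σ f j).min' hB] := by
          rw [mesAux_succ', dif_pos hB]
        rw [e1, e2]
      · have hAσ : (σ \ f j).Nonempty := by rwa [Finset.sdiff_nonempty]
        have hwmem : (σ \ f j).min' hAσ ∈ mesSet f σ := by
          apply mem_mesSet_of_mem_mesAux f hσ (j := j+1) hj
          rw [mesAux_succ', dif_neg hB, dif_pos hAσ]; simp
        have hwρ : (σ \ f j).min' hAσ ∈ ρ \ f j := by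
          rw [Finset.mem_sdiff]
          exact ⟨hM hwmem, (Finset.mem_sdiff.1 (Finset.min'_mem _ hAσ)).2⟩
        have hAρ : (ρ \ f j).Nonempty := ⟨_, hwρ⟩
        have hmin : (ρ \ f j).min' hAρ = (σ \ f j).min' hAσ :=
          le_antisymm (Finset.min'_le _ _ hwρ)
            (Finset.min'_le _ _ (Finset.sdiff_subset_sdiff hρσ Finset.Subset.rfl
              (Finset.min'_mem _ hAρ)))
        have e1 : mesAux ρ f (j+1) = mesAux σ f j ++ [(ρ \ f j).min' hAρ] := by
          rw [mesAux_succ', hprev, hBeq, dif_neg hB, dif_pos hAρ]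
        have e2 : mesAux σ f (j+1) = mesAux σ f j ++ [(σ \ f j).min' hAσ] := by
          rw [mesAux_succ', dif_neg hB, dif_pos hAσ]
        rw [e1, e2, hmin]
  have hidxρ : mesIdx f ρ = t :=
    le_antisymm (mesIdx_le f (hρσ.trans (mesIdx_spec_and f hσ).1))
      (mesIdx_le_of_mesSet_subset f hσ hρex hM)
  rw [mes, mes, hidxρ]
  exact main t le_rfl

-- === lex helper ===
lemma lex_append {r : V → V → Prop} (p : List V) {a b : V} (h : r a b) (l1 l2 : List V) :
    List.Lex r (p ++ a :: l1) (p ++ b :: l2) := by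
  induction p with
  | nil => exact List.Lex.rel h
  | cons x xs ih => exact List.Lex.cons ih

-- === KEY ===
lemma mes_eq_or_lex {σ ρ : Finset V} (hσ : ∃ j, σ ⊆ f j) (hρ : ∃ j, ρ ⊆ f j)
    (hM : mesSet f σ ⊆ ρ) (hidx : mesIdx f ρ = mesIdx f σ) :
    mes f ρ = mes f σ ∨ List.Lex (·<·) (mes f ρ) (mes f σ) := by
  set t := mesIdx f σ with ht
  have main : ∀ j, j ≤ t → mesAux ρ f j = mesAux σ f j ∨
      ∃ p a b l1 l2, a < b ∧ mesAux ρ f j = p ++ a :: l1 ∧ mesAux σ f j = p ++ b :: l2 := by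
    intro j
    induction j with
    | zero => exact fun _ => Or.inl rfl
    | succ j ih =>
      intro hj
      have hj' : j < t := hj
      rcases ih (le_of_lt hj') with hprev | ⟨p, a, b, l1, l2, hab, hd1, hd2⟩
      · have hσj : ¬ σ ⊆ f j := (mesIdx_spec_and f hσ).2 j hj'
        have hBeq : ((ρ \ f j).filter fun v => v ∈ mesAux σ f j)
            = ((σ \ f j).filter fun v => v ∈ mesAux σ f j) := by
          ext v
          simp only [Finset.mem_filter, Finset.mem_sdiff]
          constructor
          · rintro ⟨⟨hvρ, hvf⟩, hvp⟩
            exact ⟨⟨mem_mesAux f hvp, hvf⟩, hvp⟩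
          · rintro ⟨⟨hvσ, hvf⟩, hvp⟩
            exact ⟨⟨hM (mem_mesSet_of_mem_mesAux f hσ (le_of_lt hj') hvp), hvf⟩, hvp⟩
        by_cases hB : ((σ \ f j).filter fun v => v ∈ mesAux σ f j).Nonempty
        · refine Or.inl ?_
          have e1 : mesAux ρ f (j+1)
              = mesAux σ f j ++ [((σ \ f j).filter fun v => v ∈ mesAux σ f j).min' hB] := by
            rw [mesAux_succ', hprev, hBeq, dif_pos hB]
          have e2 : mesAux σ f (j+1)
              = mesAux σ f j ++ [((σ \ f j).filter fun v => v ∈ mesAux σ f j).min' hB] := by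
            rw [mesAux_succ', dif_pos hB]
          rw [e1, e2]
        · have hAσ : (σ \ f j).Nonempty := by rwa [Finset.sdiff_nonempty]
          have hwmem : (σ \ f j).min' hAσ ∈ mesSet f σ := by
            apply mem_mesSet_of_mem_mesAux f hσ (j := j+1) hj
            rw [mesAux_succ', dif_neg hB, dif_pos hAσ]; simp
          have hwρ : (σ \ f j).min' hAσ ∈ ρ \ f j := by
            rw [Finset.mem_sdiff]
            exact ⟨hM hwmem, (Finset.mem_sdiff.1 (Finset.min'_mem _ hAσ)).2⟩
          have hAρ : (ρ \ f j).Nonempty := ⟨_, hwρ⟩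
          have e1 : mesAux ρ f (j+1) = mesAux σ f j ++ [(ρ \ f j).min' hAρ] := by
            rw [mesAux_succ', hprev, hBeq, dif_neg hB, dif_pos hAρ]
          have e2 : mesAux σ f (j+1) = mesAux σ f j ++ [(σ \ f j).min' hAσ] := by
            rw [mesAux_succ', dif_neg hB, dif_pos hAσ]
          rcases lt_or_eq_of_le (Finset.min'_le _ _ hwρ) with hlt | heq
          · exact Or.inr ⟨mesAux σ f j, _, _, [], [], hlt, e1, e2⟩
          · refine Or.inl ?_
            rw [e1, e2, heq]
      · obtain ⟨Xρ, hXρ⟩ := step_append f ρ j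
        obtain ⟨Xσ, hXσ⟩ := step_append f σ j
        refine Or.inr ⟨p, a, b, l1 ++ Xρ, l2 ++ Xσ, hab, ?_, ?_⟩
        · rw [hXρ, hd1]; simp [List.append_assoc]
        · rw [hXσ, hd2]; simp [List.append_assoc]
  rcases main t le_rfl with h | ⟨p, a, b, l1, l2, hab, hd1, hd2⟩
  · refine Or.inl ?_
    rw [mes, mes, hidx]
    exact h
  · refine Or.inr ?_
    rw [mes, mes, hidx, ← ht, hd1, hd2]
    exact lex_append p hab l1 l2

-- === UNION ===
lemma mes_union {σ1 σ2 : Finset V} (h1 : ∃ j, σ1 ⊆ f j) (h2 : ∃ j, σ2 ⊆ f j)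
    (he : mes f σ1 = mes f σ2) : mes f (σ1 ∪ σ2) = mes f σ1 := by
  set t := mesIdx f σ1 with ht
  have ht2 : mesIdx f σ2 = t := by rw [← mes_length f h2, ← he, mes_length f h1]
  have main : ∀ j, j ≤ t → mesAux (σ1 ∪ σ2) f j = mesAux σ1 f j := by
    intro j
    induction j with
    | zero => intro _; rfl
    | succ j ih =>
      intro hj
      have hj' : j < t := hj
      have hprev := ih (le_of_lt hj')
      have hprev2 : mesAux σ2 f j = mesAux σ1 f j := by
        rw [mesAux_eq_take f h2 (by rw [ht2]; exact le_of_lt hj'),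
          mesAux_eq_take f h1 (le_of_lt hj'), he]
      have hσ1j : ¬ σ1 ⊆ f j := (mesIdx_spec_and f h1).2 j hj'
      have hσ2j : ¬ σ2 ⊆ f j := (mesIdx_spec_and f h2).2 j (by rw [ht2]; exact hj')
      have hAun : (σ1 ∪ σ2) \ f j = (σ1 \ f j) ∪ (σ2 \ f j) :=
        Finset.union_sdiff_distrib σ1 σ2 (f j)
      have hB1eq : (((σ1 ∪ σ2) \ f j).filter fun v => v ∈ mesAux σ1 f j)
          = ((σ1 \ f j).filter fun v => v ∈ mesAux σ1 f j) := by
        ext v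
        simp only [Finset.mem_filter, Finset.mem_sdiff, Finset.mem_union]
        constructor
        · rintro ⟨⟨_, hvf⟩, hvp⟩
          exact ⟨⟨mem_mesAux f hvp, hvf⟩, hvp⟩
        · rintro ⟨⟨hv1, hvf⟩, hvp⟩
          exact ⟨⟨Or.inl hv1, hvf⟩, hvp⟩
      have hB2eq : ((σ2 \ f j).filter fun v => v ∈ mesAux σ1 f j)
          = ((σ1 \ f j).filter fun v => v ∈ mesAux σ1 f j) := by
        ext v
        simp only [Finset.mem_filter, Finset.mem_sdiff]
        constructor
        · rintro ⟨⟨_, hvf⟩, hvp⟩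
          exact ⟨⟨mem_mesAux f hvp, hvf⟩, hvp⟩
        · rintro ⟨⟨hv1, hvf⟩, hvp⟩
          refine ⟨⟨?_, hvf⟩, hvp⟩
          have hv2 : v ∈ mesAux σ2 f j := by rw [hprev2]; exact hvp
          exact mem_mesAux f hv2
      by_cases hB : ((σ1 \ f j).filter fun v => v ∈ mesAux σ1 f j).Nonempty
      · have e1 : mesAux (σ1 ∪ σ2) f (j+1)
            = mesAux σ1 f j ++ [((σ1 \ f j).filter fun v => v ∈ mesAux σ1 f j).min' hB] := by
          rw [mesAux_succ', hprev, hB1eq, dif_pos hB]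
        have e2 : mesAux σ1 f (j+1)
            = mesAux σ1 f j ++ [((σ1 \ f j).filter fun v => v ∈ mesAux σ1 f j).min' hB] := by
          rw [mesAux_succ', dif_pos hB]
        rw [e1, e2]
      · have hA1 : (σ1 \ f j).Nonempty := by rwa [Finset.sdiff_nonempty]
        have hA2 : (σ2 \ f j).Nonempty := by rwa [Finset.sdiff_nonempty]
        have h12 : mesAux σ2 f (j+1) = mesAux σ1 f (j+1) := by
          rw [mesAux_eq_take f h2 (by rw [ht2]; exact hj),
            mesAux_eq_take f h1 hj, he]
        have he2 : mesAux σ2 f (j+1) = mesAux σ1 f j ++ [(σ2 \ f j).min' hA2] := by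
          rw [mesAux_succ', hprev2, hB2eq, dif_neg hB, dif_pos hA2]
        have he1 : mesAux σ1 f (j+1) = mesAux σ1 f j ++ [(σ1 \ f j).min' hA1] := by
          rw [mesAux_succ', dif_neg hB, dif_pos hA1]
        have hc : (σ2 \ f j).min' hA2 = (σ1 \ f j).min' hA1 := by
          have h' := h12
          rw [he2, he1] at h'
          simpa using List.append_cancel_left h'
        have hAu : ((σ1 ∪ σ2) \ f j).Nonempty := by
          refine ⟨(σ1 \ f j).min' hA1, ?_⟩
          rw [hAun]
          exact Finset.mem_union_left _ (Finset.min'_mem _ hA1)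
        have hmin : ((σ1 ∪ σ2) \ f j).min' hAu = (σ1 \ f j).min' hA1 := by
          refine le_antisymm (Finset.min'_le _ _ ?_) ?_
          · rw [hAun]; exact Finset.mem_union_left _ (Finset.min'_mem _ hA1)
          · have hm := Finset.min'_mem _ hAu
            have hm' : ((σ1 ∪ σ2) \ f j).min' hAu ∈ (σ1 \ f j) ∪ (σ2 \ f j) := by
              rw [← hAun]; exact hm
            rcases Finset.mem_union.1 hm' with hm | hm
            · exact Finset.min'_le _ _ hm
            · calc (σ1 \ f j).min' hA1 = (σ2 \ f j).min' hA2 := hc.symm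
                _ ≤ _ := Finset.min'_le _ _ hm
        have hBu : ¬ (((σ1 ∪ σ2) \ f j).filter fun v => v ∈ mesAux σ1 f j).Nonempty := by
          rw [hB1eq]; exact hB
        have e1 : mesAux (σ1 ∪ σ2) f (j+1)
            = mesAux σ1 f j ++ [((σ1 ∪ σ2) \ f j).min' hAu] := by
          rw [mesAux_succ', hprev, dif_neg hBu, dif_pos hAu]
        rw [e1, he1, hmin]
  have hexu : ∃ j, σ1 ∪ σ2 ⊆ f j :=
    ⟨t, Finset.union_subset (mesIdx_spec_and f h1).1 (by
      have h' := (mesIdx_spec_and f h2).1; rwa [ht2] at h')⟩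
  have hidxu : mesIdx f (σ1 ∪ σ2) = t := by
    refine le_antisymm (mesIdx_le f (Finset.union_subset (mesIdx_spec_and f h1).1
      (by have h' := (mesIdx_spec_and f h2).1; rwa [ht2] at h'))) (mesIdx_ge f hexu ?_)
    intro k hk hsub
    obtain ⟨a, _, haσ, haf, _⟩ := mes_entry f h1 hk
    exact haf (hsub (Finset.mem_union_left _ haσ))
  rw [mes, mes, hidxu]
  exact main t le_rfl

end AuxMES

section MAIN
variable {K : Finset (Finset V)} {m : ℕ} {facets : ℕ → Finset V}

lemma exists_maxFace (hσ : ∀ σ ∈ K, True) {σ : Finset V} (h : σ ∈ K) :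
    ∃ s, IsMaxFace K s ∧ σ ⊆ s := by
  obtain ⟨s, hs, hmax⟩ := Finset.exists_max_image (K.filter (σ ⊆ ·)) Finset.card
    ⟨σ, by simp [h]⟩
  simp only [Finset.mem_filter] at hs
  refine ⟨s, ⟨hs.1, fun t ht hst => ?_⟩, hs.2⟩
  have htf : t ∈ K.filter (σ ⊆ ·) := by simp [ht, hs.2.trans hst]
  exact (Finset.eq_of_subset_of_card_le hst (hmax t htf)).symm

variable (henum : ∀ s : Finset V, IsMaxFace K s ↔ ∃ j < m, facets j = s)

include henum in
lemma hex_of_mem {σ : Finset V} (h : σ ∈ K) : ∃ j, σ ⊆ facets j := by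
  obtain ⟨s, hs, hsub⟩ := exists_maxFace (fun _ _ => trivial) h
  obtain ⟨j, _, hje⟩ := (henum s).1 hs
  exact ⟨j, hje ▸ hsub⟩

include henum in
lemma facetsIdx_mem {σ : Finset V} (h : σ ∈ K) : facets (mesIdx facets σ) ∈ K := by
  obtain ⟨s, hs, hsub⟩ := exists_maxFace (fun _ _ => trivial) h
  obtain ⟨j, hj, hje⟩ := (henum s).1 hs
  have hle : mesIdx facets σ ≤ j := mesIdx_le facets (hje ▸ hsub)
  exact ((henum (facets (mesIdx facets σ))).2 ⟨_, lt_of_le_of_lt hle hj, rfl⟩).1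

include henum in
lemma collapse_filter (hK : IsComplex K) :
    ∀ (n : ℕ) (S : Finset (List V)),
      (K.filter fun σ => mes facets σ ∈ S).card ≤ n →
      Collapsible (K.sup fun σ => (mesSet facets σ).card)
        (K.filter fun σ => mes facets σ ∈ S) := by
  intro n
  induction n with
  | zero =>
    intro S hcard
    rw [Nat.le_zero, Finset.card_eq_zero] at hcard
    rw [hcard]
    exact Relation.ReflTransGen.refl
  | succ n ih =>
    intro S hcard
    by_cases hne : (K.filter fun σ => mes facets σ ∈ S).Nonempty
    swap
    · rw [Finset.not_nonempty_iff_eq_empty] at hne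
      rw [hne]
      exact Relation.ReflTransGen.refl
    -- choose the class to remove
    set Kc := K.filter fun σ => mes facets σ ∈ S with hKc
    set Img := Kc.image (mes facets) with hImg
    have hImgne : Img.Nonempty := hne.image _
    set ℓ := (Img.image List.length).max' (hImgne.image _) with hℓ
    set T' := Img.filter (fun u => u.length = ℓ) with hT'
    have hT'ne : T'.Nonempty := by
      obtain ⟨u, hu, hul⟩ := Finset.mem_image.1 ((Img.image List.length).max'_mem (hImgne.image _))
      exact ⟨u, Finset.mem_filter.2 ⟨hu, hul⟩⟩
    set w := T'.min' hT'ne with hw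
    have hwT' : w ∈ T' := T'.min'_mem hT'ne
    have hwImg : w ∈ Img := (Finset.mem_filter.1 hwT').1
    have hwlen : w.length = ℓ := (Finset.mem_filter.1 hwT').2
    obtain ⟨σw, hσwKc, hσww⟩ := Finset.mem_image.1 hwImg
    have hσwK : σw ∈ K := (Finset.mem_filter.1 hσwKc).1
    have hwS : w ∈ S := by
      have := (Finset.mem_filter.1 hσwKc).2
      rwa [hσww] at this
    have hlen_le : ∀ u ∈ Img, u.length ≤ ℓ := fun u hu =>
      (Img.image List.length).le_max' _ (Finset.mem_image_of_mem _ hu)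
    -- Mw
    set Mw := w.toFinset with hMw
    have hMwσw : Mw ⊆ σw := by
      rw [hMw, ← hσww]
      exact mesSet_subset facets
    have hMwK : Mw ∈ K := hK σw hσwK Mw hMwσw
    have hmesMw : mes facets Mw = w := by
      have := mes_eq_of_between facets (hex_of_mem henum hσwK)
        (by rw [mesSet, hσww]) hMwσw
      rw [this, hσww]
    have hmesSetMw : mesSet facets Mw = Mw := by rw [mesSet, hmesMw]
    have hMwKc : Mw ∈ Kc := Finset.mem_filter.2 ⟨hMwK, by rw [hmesMw]; exact hwS⟩
    -- length facts
    have hidxMw : mesIdx facets Mw = ℓ := by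
      rw [← mes_length facets (hex_of_mem henum hMwK), hmesMw, hwlen]
    -- characterization of faces containing Mw
    have hchar : ∀ ρ ∈ Kc, (Mw ⊆ ρ ↔ mes facets ρ = w) := by
      intro ρ hρ
      have hρK : ρ ∈ K := (Finset.mem_filter.1 hρ).1
      have hρImg : mes facets ρ ∈ Img := Finset.mem_image_of_mem _ hρ
      constructor
      · intro hMρ
        have hMsub : mesSet facets Mw ⊆ ρ := by rw [hmesSetMw]; exact hMρ
        have h1 : mesIdx facets Mw ≤ mesIdx facets ρ :=
          mesIdx_le_of_mesSet_subset facets (hex_of_mem henum hMwK)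
            (hex_of_mem henum hρK) hMsub
        have h2 : mesIdx facets ρ ≤ ℓ := by
          rw [← mes_length facets (hex_of_mem henum hρK)]
          exact hlen_le _ hρImg
        have hidxρ : mesIdx facets ρ = mesIdx facets Mw := by omega
        rcases mes_eq_or_lex facets (hex_of_mem henum hMwK) (hex_of_mem henum hρK)
            hMsub hidxρ with he | hlex
        · rw [he, hmesMw]
        · exfalso
          have hρT' : mes facets ρ ∈ T' := by
            refine Finset.mem_filter.2 ⟨hρImg, ?_⟩
            rw [mes_length facets (hex_of_mem henum hρK), hidxρ, hidxMw]
          have hge : w ≤ mes facets ρ := T'.min'_le _ hρT'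
          have hlt : mes facets ρ < w := by
            rw [hmesMw] at hlex
            exact hlex
          exact absurd hlt (not_lt.2 hge)
      · intro he
        have := mesSet_subset facets (σ := ρ)
        rw [mesSet, he] at this
        exact this
    -- the top face T
    set C := K.filter (fun σ => mes facets σ = w) with hC
    have hCne : C.Nonempty := ⟨σw, Finset.mem_filter.2 ⟨hσwK, hσww⟩⟩
    set Tw := C.sup' hCne id with hTw
    have hTwp : Tw ∈ K ∧ mes facets Tw = w := by
      refine Finset.sup'_induction (p := fun x => x ∈ K ∧ mes facets x = w) hCne id ?_ ?_
      · rintro x ⟨hxK, hxw⟩ y ⟨hyK, hyw⟩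
        have hxy : mes facets x = mes facets y := hxw.trans hyw.symm
        have hidxeq : mesIdx facets y = mesIdx facets x := by
          rw [← mes_length facets (hex_of_mem henum hyK),
            ← mes_length facets (hex_of_mem henum hxK), hxw, hyw]
        have hsub : x ∪ y ⊆ facets (mesIdx facets x) := by
          refine Finset.union_subset (mesIdx_spec_and facets (hex_of_mem henum hxK)).1 ?_
          have := (mesIdx_spec_and facets (hex_of_mem henum hyK)).1
          rwa [hidxeq] at this
        have hxyK : x ⊔ y ∈ K := by
          rw [Finset.sup_eq_union]
          exact hK _ (facetsIdx_mem henum hxK) _ hsub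
        refine ⟨hxyK, ?_⟩
        have := mes_union facets (hex_of_mem henum hxK) (hex_of_mem henum hyK) hxy
        rw [Finset.sup_eq_union, this, hxw]
      · intro b hb
        exact ⟨(Finset.mem_filter.1 hb).1, (Finset.mem_filter.1 hb).2⟩
    have hTwKc : Tw ∈ Kc := Finset.mem_filter.2 ⟨hTwp.1, by rw [hTwp.2]; exact hwS⟩
    have hsubTw : ∀ ρ ∈ C, ρ ⊆ Tw := fun ρ hρ => Finset.le_sup' id hρ
    -- free face
    have hfree : IsFreeFace Kc Mw := by
      refine ⟨hMwKc, Tw, hTwKc, ?_, ?_⟩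
      · exact hMwσw.trans (hsubTw σw (Finset.mem_filter.2 ⟨hσwK, hσww⟩))
      · intro ρ hρ hMρ
        have hρw : mes facets ρ = w := (hchar ρ hρ).1 hMρ
        exact hsubTw ρ (Finset.mem_filter.2 ⟨(Finset.mem_filter.1 hρ).1, hρw⟩)
    -- card bound
    have hcardMw : Mw.card ≤ K.sup fun σ => (mesSet facets σ).card := by
      calc Mw.card = (mesSet facets Mw).card := by rw [hmesSetMw]
        _ ≤ _ := Finset.le_sup (f := fun σ => (mesSet facets σ).card) hMwK
    -- the collapse step
    have hext : (K.filter fun σ => mes facets σ ∈ S.erase w)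
        = Kc.filter fun ρ => ¬ Mw ⊆ ρ := by
      ext ρ
      simp only [Finset.mem_filter, Finset.mem_erase, hKc]
      constructor
      · rintro ⟨hρK, hρne, hρS⟩
        refine ⟨⟨hρK, hρS⟩, fun hMρ => ?_⟩
        exact hρne ((hchar ρ (Finset.mem_filter.2 ⟨hρK, hρS⟩)).1 hMρ)
      · rintro ⟨⟨hρK, hρS⟩, hnM⟩
        refine ⟨hρK, fun he => ?_, hρS⟩
        exact hnM ((hchar ρ (Finset.mem_filter.2 ⟨hρK, hρS⟩)).2 he)
    have hstep : ElemCollapse (K.sup fun σ => (mesSet facets σ).card) Kc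
        (K.filter fun σ => mes facets σ ∈ S.erase w) :=
      ⟨Mw, hfree, hcardMw, hext⟩
    -- recursion
    have hss : (K.filter fun σ => mes facets σ ∈ S.erase w) ⊂ Kc := by
      rw [hext]
      refine Finset.filter_ssubset.2 ⟨Mw, hMwKc, ?_⟩
      simp [hmesMw]
    have hlt : (K.filter fun σ => mes facets σ ∈ S.erase w).card ≤ n := by
      have := Finset.card_lt_card hss
      omega
    exact Relation.ReflTransGen.head hstep (ih (S.erase w) hlt)
end MAIN

/-- Every simplicial complex `K` is `d(K)`-collapsible, where
`d(K) = max_{σ ∈ K} |M(σ)|` and `M(σ)` is the set of vertices of the minimal exclusion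
sequence of `σ` (with respect to the given vertex order and facet order). -/
theorem collapsible_of_mes (K : Finset (Finset V)) (hK : IsComplex K)
    (m : ℕ) (facets : ℕ → Finset V)
    (henum : ∀ s : Finset V, IsMaxFace K s ↔ ∃ j < m, facets j = s)
    (hinj : ∀ j < m, ∀ k < m, facets j = facets k → j = k) :
    Collapsible (K.sup fun σ => (mesSet facets σ).card) K := by
  classical
  have hfull : K.filter (fun σ => mes facets σ ∈ K.image (mes facets)) = K := by
    ext σ
    simp only [Finset.mem_filter, Finset.mem_image]
    exact ⟨fun h => h.1, fun h => ⟨h, σ, h, rfl⟩⟩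
  have hres := collapse_filter henum hK K.card (K.image (mes facets)) (by rw [hfull])
  rwa [hfull] at hres
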